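/- Let u : ℝ² → ℝ (or on a strip [0,1] × ℝ) be a bounded harmonic function on the infinite strip S = ℝ × (0,1), continuous up to the boundary, vanishing on both boundary lines ℝ × {0} and ℝ × {1}. Then u ≡ 0 on S. -/

import Mathlib

open Set Filter Topology

/-- A function on `ℝ²` is harmonic on a set if it is `C²` there and its Laplacian
(computed via second derivatives of the coordinate slices) vanishes. -/
def HarmonicOnStrip (u : ℝ × ℝ → ℝ) (S : Set (ℝ × ℝ)) : Prop :=
  ContDiffOn ℝ 2 u S ∧ ∀ p ∈ S,
    deriv (deriv fun x => u (x, p.2)) p.1 + deriv (deriv fun y => u (p.1, y)) p.2 = 0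


lemma second_deriv_nonneg_of_isLocalMin {f : ℝ → ℝ} {U : Set ℝ} (hU : IsOpen U) {a : ℝ}
    (ha : a ∈ U) (hf : ContDiffOn ℝ 2 f U) (hmin : IsLocalMin f a) :
    0 ≤ deriv (deriv f) a := by
  by_contra hneg
  push_neg at hneg
  have hfd : DifferentiableOn ℝ f U := hf.differentiableOn (by norm_num)
  have hf1 : ContDiffOn ℝ 1 (deriv f) U := hf.deriv_of_isOpen hU (by norm_num)
  have hfd' : DifferentiableOn ℝ (deriv f) U := hf1.differentiableOn one_ne_zero
  have hda : DifferentiableAt ℝ (deriv f) a := hfd'.differentiableAt (hU.mem_nhds ha)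
  have h1 : HasDerivAt (deriv f) (deriv (deriv f) a) a := hda.hasDerivAt
  have hd0 : deriv f a = 0 := hmin.deriv_eq_zero
  have hslope : Tendsto (slope (deriv f) a) (𝓝[≠] a) (𝓝 (deriv (deriv f) a)) :=
    hasDerivAt_iff_tendsto_slope.1 h1
  have hsl : ∀ᶠ x in 𝓝[≠] a, slope (deriv f) a x < 0 :=
    hslope.eventually_lt_const hneg
  have hle : (𝓝[>] a : Filter ℝ) ≤ 𝓝[≠] a :=
    nhdsWithin_mono a (fun x hx => ne_of_gt hx)
  have hsl' : ∀ᶠ x in 𝓝[>] a, deriv f x < 0 := by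
    filter_upwards [hle hsl, self_mem_nhdsWithin] with x hx hxa
    have hxa' : a < x := hxa
    have hx2 : deriv f x = slope (deriv f) a x * (x - a) + deriv f a := by
      rw [slope_def_field, div_mul_cancel₀ _ (by linarith : x - a ≠ 0)]
      ring
    rw [hx2, hd0, add_zero]
    exact mul_neg_of_neg_of_pos hx (by linarith)
  have hU' : ∀ᶠ x in 𝓝[>] a, x ∈ U := nhdsWithin_le_nhds (hU.eventually_mem ha)
  have hmin' : ∀ᶠ x in 𝓝[>] a, f a ≤ f x := nhdsWithin_le_nhds hmin
  obtain ⟨u, hu, hsub⟩ := mem_nhdsGT_iff_exists_Ioo_subset.1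
    ((hsl'.and (hU'.and hmin')).filter_mono le_rfl : _)
  set b := (a + u) / 2 with hb
  have hab : a < b := by rw [hb]; have := hu; simp only [mem_Ioi] at this; linarith
  have hbu : b < u := by rw [hb]; have := hu; simp only [mem_Ioi] at this; linarith
  have hIcc : Icc a b ⊆ U := by
    intro x hx
    rcases eq_or_lt_of_le hx.1 with h | h
    · exact h ▸ ha
    · exact (hsub ⟨h, lt_of_le_of_lt hx.2 hbu⟩).2.1
  have hanti : StrictAntiOn f (Icc a b) := by
    apply strictAntiOn_of_deriv_neg (convex_Icc a b) (hfd.continuousOn.mono hIcc)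
    intro x hx
    rw [interior_Icc] at hx
    exact (hsub ⟨hx.1, lt_trans hx.2 hbu⟩).1
  have hfb : f b < f a := hanti (left_mem_Icc.2 hab.le) (right_mem_Icc.2 hab.le) hab
  have : f a ≤ f b := (hsub ⟨hab, hbu⟩).2.2
  linarith

lemma deriv2_quad_sub {g : ℝ → ℝ} {U : Set ℝ} (hU : IsOpen U) {a : ℝ} (ha : a ∈ U)
    (hg : ContDiffOn ℝ 2 g U) (c1 c0 : ℝ) :
    deriv (deriv (fun x => c1 * x^2 + c0 - g x)) a = 2*c1 - deriv (deriv g) a := by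
  have hgd : DifferentiableOn ℝ g U := hg.differentiableOn (by norm_num)
  have hg1 : ContDiffOn ℝ 1 (deriv g) U := hg.deriv_of_isOpen hU (by norm_num)
  have hgd' : DifferentiableOn ℝ (deriv g) U := hg1.differentiableOn one_ne_zero
  have hev : deriv (fun x => c1 * x^2 + c0 - g x) =ᶠ[𝓝 a] fun x => 2*c1*x - deriv g x := by
    filter_upwards [hU.eventually_mem ha] with x hx
    have h1 : HasDerivAt (fun x : ℝ => c1 * x^2 + c0) (2*c1*x) x := by
      have := ((hasDerivAt_pow 2 x).const_mul c1).add_const c0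
      exact this.congr_deriv (by push_cast; ring)
    exact (h1.sub (hgd.differentiableAt (hU.mem_nhds hx)).hasDerivAt).deriv
  rw [hev.deriv_eq]
  have h2 : HasDerivAt (fun x : ℝ => 2*c1*x) (2*c1) a := by
    simpa using (hasDerivAt_id a).const_mul (2*c1)
  exact (h2.sub (hgd'.differentiableAt (hU.mem_nhds ha)).hasDerivAt).deriv

lemma strip_key (u : ℝ × ℝ → ℝ) (M : ℝ)
    (S : Set (ℝ × ℝ)) (hS : S = {p : ℝ × ℝ | p.2 ∈ Set.Ioo (0 : ℝ) 1})
    (hharm : HarmonicOnStrip u S)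
    (hbdd : ∀ p ∈ S, |u p| ≤ M)
    (hcont : ContinuousOn u (closure S))
    (hbdry : ∀ x : ℝ, u (x, 0) = 0 ∧ u (x, 1) = 0)
    (hM : 0 ≤ M) :
    ∀ p ∈ S, ∀ R : ℝ, |p.1| < R → u p ≤ M / R^2 * (p.1^2 + 1) := by
  intro p hp R hR
  have hp2 : p.2 ∈ Set.Ioo (0:ℝ) 1 := by rw [hS] at hp; exact hp
  have hR0 : (0:ℝ) < R := lt_of_le_of_lt (abs_nonneg _) hR
  have hR2 : (0:ℝ) < R^2 := by positivity
  have hMR : 0 ≤ M / R^2 := div_nonneg hM hR2.le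
  have hSprod : S = (Set.univ : Set ℝ) ×ˢ Set.Ioo (0:ℝ) 1 := by
    rw [hS]; ext q; simp [Set.mem_prod]
  have hclo : closure S = (Set.univ : Set ℝ) ×ˢ Set.Icc (0:ℝ) 1 := by
    rw [hSprod, closure_prod_eq, closure_univ, closure_Ioo (by norm_num : (0:ℝ) ≠ 1)]
  set v : ℝ × ℝ → ℝ := fun q => M / R^2 * (q.1^2 - q.2^2 + 1) with hv
  have keyδ : ∀ δ : ℝ, 0 < δ → u p ≤ v p + δ * (R^2 + 1) := by
    intro δ hδ
    set w : ℝ × ℝ → ℝ := fun q => v q - u q - δ * (q.1^2 + q.2^2) with hw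
    set K : Set (ℝ × ℝ) := Set.Icc (-R) R ×ˢ Set.Icc (0:ℝ) 1 with hK
    have hKclo : K ⊆ closure S := by
      rw [hclo]; exact Set.prod_mono (Set.subset_univ _) le_rfl
    have hKc : IsCompact K := isCompact_Icc.prod isCompact_Icc
    have hpK : p ∈ K := ⟨⟨(abs_lt.1 hR).1.le, (abs_lt.1 hR).2.le⟩, hp2.1.le, hp2.2.le⟩
    have hvc : Continuous v := by rw [hv]; fun_prop
    have hwcont : ContinuousOn w K := by
      rw [hw]
      exact (hvc.continuousOn.sub (hcont.mono hKclo)).sub (by fun_prop)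
    obtain ⟨z, hzK, hzmin⟩ := hKc.exists_isMinOn ⟨p, hpK⟩ hwcont
    have hz1 : z.1 ∈ Set.Icc (-R) R := hzK.1
    have hz2 : z.2 ∈ Set.Icc (0:ℝ) 1 := hzK.2
    have hmain : -(δ * (R^2 + 1)) ≤ w z := by
      by_cases hzi : (-R < z.1 ∧ z.1 < R) ∧ (0 < z.2 ∧ z.2 < 1)
      · exfalso
        have hzS : z ∈ S := by rw [hS]; exact ⟨hzi.2.1, hzi.2.2⟩
        have hgXc : ContDiffOn ℝ 2 (fun x => u (x, z.2)) Set.univ := by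
          apply hharm.1.comp ((contDiff_id.prodMk contDiff_const).contDiffOn)
          intro x _
          rw [hS]; exact ⟨hzi.2.1, hzi.2.2⟩
        have hgYc : ContDiffOn ℝ 2 (fun y => u (z.1, y)) (Set.Ioo (0:ℝ) 1) := by
          apply hharm.1.comp ((contDiff_const.prodMk contDiff_id).contDiffOn)
          intro y hy
          rw [hS]; exact hy
        have hminX : IsLocalMin (fun x => (M/R^2 - δ) * x^2 +
            (M/R^2*(1 - z.2^2) - δ*z.2^2) - u (x, z.2)) z.1 := by
          have h1 : IsLocalMin (fun x => w (x, z.2)) z.1 := by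
            filter_upwards [isOpen_Ioo.eventually_mem
              (⟨hzi.1.1, hzi.1.2⟩ : z.1 ∈ Set.Ioo (-R) R)] with x hx
            have hxK : (x, z.2) ∈ K := ⟨⟨hx.1.le, hx.2.le⟩, hz2⟩
            have := isMinOn_iff.1 hzmin _ hxK
            simpa using this
          have heq : (fun x => (M/R^2 - δ) * x^2 + (M/R^2*(1 - z.2^2) - δ*z.2^2) - u (x, z.2))
              = fun x => w (x, z.2) := by
            funext x; simp only [hw, hv]; ring
          rw [heq]; exact h1
        have hminY : IsLocalMin (fun y => (-(M/R^2) - δ) * y^2 +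
            (M/R^2*(z.1^2 + 1) - δ*z.1^2) - u (z.1, y)) z.2 := by
          have h1 : IsLocalMin (fun y => w (z.1, y)) z.2 := by
            filter_upwards [isOpen_Ioo.eventually_mem
              (⟨hzi.2.1, hzi.2.2⟩ : z.2 ∈ Set.Ioo (0:ℝ) 1)] with y hy
            have hyK : (z.1, y) ∈ K := ⟨hz1, ⟨hy.1.le, hy.2.le⟩⟩
            have := isMinOn_iff.1 hzmin _ hyK
            simpa using this
          have heq : (fun y => (-(M/R^2) - δ) * y^2 + (M/R^2*(z.1^2 + 1) - δ*z.1^2) - u (z.1, y))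
              = fun y => w (z.1, y) := by
            funext y; simp only [hw, hv]; ring
          rw [heq]; exact h1
        have hquadX : ContDiff ℝ 2 (fun x : ℝ => (M/R^2 - δ) * x^2 +
            (M/R^2*(1 - z.2^2) - δ*z.2^2)) := by fun_prop
        have hquadY : ContDiff ℝ 2 (fun y : ℝ => (-(M/R^2) - δ) * y^2 +
            (M/R^2*(z.1^2 + 1) - δ*z.1^2)) := by fun_prop
        have hX := second_deriv_nonneg_of_isLocalMin isOpen_univ (Set.mem_univ z.1)
          (hquadX.contDiffOn.sub hgXc) hminX
        have hY := second_deriv_nonneg_of_isLocalMin isOpen_Ioo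
          (⟨hzi.2.1, hzi.2.2⟩ : z.2 ∈ Set.Ioo (0:ℝ) 1) (hquadY.contDiffOn.sub hgYc) hminY
        rw [deriv2_quad_sub isOpen_univ (Set.mem_univ z.1) hgXc _ _] at hX
        rw [deriv2_quad_sub isOpen_Ioo (⟨hzi.2.1, hzi.2.2⟩ : z.2 ∈ Set.Ioo (0:ℝ) 1)
          hgYc _ _] at hY
        have hlap := hharm.2 z hzS
        linarith
      · -- boundary case
        have hz1sq : z.1^2 ≤ R^2 := by nlinarith [hz1.1, hz1.2]
        have hz2sq : z.2^2 ≤ 1 := by nlinarith [hz2.1, hz2.2]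
        have hvz : 0 ≤ v z - u z := by
          by_cases h20 : z.2 = 0
          · have hu0 : u z = 0 := by
              rw [show z = (z.1, (0:ℝ)) from by rw [← h20]]
              exact (hbdry z.1).1
            have h2sq : z.2^2 = 0 := by rw [h20]; ring
            simp only [hv]
            nlinarith [sq_nonneg z.1]
          · by_cases h21 : z.2 = 1
            · have hu0 : u z = 0 := by
                rw [show z = (z.1, (1:ℝ)) from by rw [← h21]]
                exact (hbdry z.1).2
              have h2sq : z.2^2 = 1 := by rw [h21]; ring
              simp only [hv]
              nlinarith [sq_nonneg z.1]
            · have h2i : z.2 ∈ Set.Ioo (0:ℝ) 1 :=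
                ⟨lt_of_le_of_ne hz2.1 (Ne.symm h20), lt_of_le_of_ne hz2.2 h21⟩
              have hzS : z ∈ S := by rw [hS]; exact h2i
              have hub : u z ≤ M := (abs_le.1 (hbdd z hzS)).2
              have h1sq : z.1^2 = R^2 := by
                have h1 : ¬(-R < z.1 ∧ z.1 < R) := fun h => hzi ⟨h, h2i.1, h2i.2⟩
                rcases eq_or_lt_of_le hz1.1 with h | h
                · rw [← h]; ring
                · rcases eq_or_lt_of_le hz1.2 with h' | h'
                  · rw [h']
                  · exact absurd ⟨h, h'⟩ h1
              have hc : M / R^2 * R^2 = M := div_mul_cancel₀ M hR2.ne'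
              simp only [hv]
              nlinarith [hMR, hz2sq]
        simp only [hw] at hvz ⊢
        nlinarith [hδ]
    have hwp := isMinOn_iff.1 hzmin p hpK
    simp only [hw] at hwp hmain
    nlinarith [sq_nonneg p.1, sq_nonneg p.2, hδ, hmain]
  have huv : u p ≤ v p := by
    apply le_of_forall_pos_le_add
    intro ε hε
    have hδ : 0 < ε / (R^2 + 1) := by positivity
    have := keyδ _ hδ
    rwa [div_mul_cancel₀ ε (by positivity : R^2 + 1 ≠ 0)] at this
  simp only [hv] at huv
  nlinarith [sq_nonneg p.2]

theorem strip_liouville (u : ℝ × ℝ → ℝ) (M : ℝ)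
    (S : Set (ℝ × ℝ)) (hS : S = {p : ℝ × ℝ | p.2 ∈ Set.Ioo (0 : ℝ) 1})
    (hharm : HarmonicOnStrip u S)
    (hbdd : ∀ p ∈ S, |u p| ≤ M)
    (hcont : ContinuousOn u (closure S))
    (hbdry : ∀ x : ℝ, u (x, 0) = 0 ∧ u (x, 1) = 0) :
    ∀ p ∈ S, u p = 0 := by
  intro p hp
  have hMnn : 0 ≤ M := le_trans (abs_nonneg _)
    (hbdd ((0:ℝ), (1/2:ℝ)) (by rw [hS]; constructor <;> norm_num))
  have hneg : HarmonicOnStrip (fun q => -u q) S := by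
    refine ⟨hharm.1.neg, fun q hq => ?_⟩
    have hdx : deriv (deriv fun x => -u (x, q.2)) q.1
        = -(deriv (deriv fun x => u (x, q.2)) q.1) := by
      have e1 : (deriv fun x => -u (x, q.2)) = fun x => -(deriv (fun x => u (x, q.2)) x) := by
        funext x; exact deriv.neg
      rw [e1]; exact deriv.neg
    have hdy : deriv (deriv fun y => -u (q.1, y)) q.2
        = -(deriv (deriv fun y => u (q.1, y)) q.2) := by
      have e1 : (deriv fun y => -u (q.1, y)) = fun y => -(deriv (fun y => u (q.1, y)) y) := by
        funext y; exact deriv.neg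
      rw [e1]; exact deriv.neg
    have := hharm.2 q hq
    rw [hdx, hdy]; linarith
  have hkey1 := strip_key u M S hS hharm hbdd hcont hbdry hMnn p hp
  have hkey2 := strip_key (fun q => -u q) M S hS hneg
    (fun q hq => by simpa using hbdd q hq) hcont.neg
    (fun x => by simp [(hbdry x).1, (hbdry x).2]) hMnn p hp
  have habs : ∀ R : ℝ, |p.1| < R → |u p| ≤ M / R^2 * (p.1^2 + 1) := by
    intro R hR
    have h1 := hkey1 R hR
    have h2 := hkey2 R hR
    exact abs_le.2 ⟨by linarith, h1⟩
  have htend : Tendsto (fun R : ℝ => M / R^2 * (p.1^2 + 1)) atTop (𝓝 0) := by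
    have h1 : Tendsto (fun R : ℝ => R^2) atTop atTop :=
      tendsto_pow_atTop two_ne_zero
    have h2 : Tendsto (fun R : ℝ => M / R^2) atTop (𝓝 0) :=
      Tendsto.div_atTop tendsto_const_nhds h1
    simpa using h2.mul_const (p.1^2 + 1)
  have hev : ∀ᶠ R in atTop, |u p| ≤ M / R^2 * (p.1^2 + 1) := by
    filter_upwards [eventually_gt_atTop |p.1|] with R hR
    exact habs R hR
  have hle : |u p| ≤ 0 := ge_of_tendsto htend hev
  exact abs_eq_zero.1 (le_antisymm hle (abs_nonneg _))
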